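/- Total variance bound: for any stationary policy π in a discounted MDP with costs plus regularizer bounded in [0, 1+h̄], ‖(I − γP_π)^{-1} √(σ^π_{V^π})‖_∞² ≤ (1+h̄)²(1+γ) / (γ²(1−γ)³), where σ^π_{V^π} = P_π (V^π)² − (P_π V^π)² is the one-step variance vector and the square root is entrywise. -/

import Mathlib

open Matrix Finset

private lemma matpow_nonneg {S : Type*} [Fintype S] [DecidableEq S]
    (P : Matrix S S ℝ) (hP0 : ∀ s s', 0 ≤ P s s') :
    ∀ (i : ℕ) (s t : S), 0 ≤ (P ^ i) s t := by
  intro i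
  induction i with
  | zero => intro s t; rw [pow_zero, Matrix.one_apply]; split <;> norm_num
  | succ n ih =>
    intro s t
    rw [pow_succ, Matrix.mul_apply]
    exact Finset.sum_nonneg fun k _ => mul_nonneg (ih s k) (hP0 k t)

private lemma matpow_rowsum {S : Type*} [Fintype S] [DecidableEq S]
    (P : Matrix S S ℝ) (hP1 : ∀ s, ∑ t, P s t = 1) :
    ∀ (i : ℕ) (s : S), ∑ t, (P ^ i) s t = 1 := by
  intro i
  induction i with
  | zero => intro s; simp [Matrix.one_apply]
  | succ n ih =>
    intro s
    simp only [pow_succ, Matrix.mul_apply]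
    rw [Finset.sum_comm]
    simp_rw [← Finset.mul_sum, hP1, mul_one]
    exact ih s

private lemma matpow_le_one {S : Type*} [Fintype S] [DecidableEq S]
    (P : Matrix S S ℝ) (hP0 : ∀ s s', 0 ≤ P s s') (hP1 : ∀ s, ∑ t, P s t = 1)
    (i : ℕ) (s t : S) : (P ^ i) s t ≤ 1 := by
  rw [← matpow_rowsum P hP1 i s]
  exact Finset.single_le_sum (fun k _ => matpow_nonneg P hP0 i s k) (Finset.mem_univ t)


set_option maxHeartbeats 1600000 in
/-- Total variance bound. For any stationary policy in a discounted MDP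
whose per-step cost-plus-regularizer `r` lies in `[0, 1+h̄]`, the value function `V^π`
(fixed point of `V = r + γP_πV`) satisfies
`‖(I − γP_π)⁻¹ √(σ^π_{V^π})‖_∞² ≤ (1+h̄)²(1+γ)/(γ²(1−γ)³)`, where
`σ^π_{V^π} = P_π (V^π)² − (P_π V^π)²` and `(I − γP_π)⁻¹ = ∑_i (γP_π)^i`. -/
theorem total_variance_bound
    {S : Type*} [Fintype S] [DecidableEq S]
    (γ : ℝ) (hγ0 : 0 < γ) (hγ1 : γ < 1)
    (hbar : ℝ) (hhbar : 0 ≤ hbar)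
    (P : Matrix S S ℝ)
    (hP0 : ∀ s s', 0 ≤ P s s') (hP1 : ∀ s, ∑ s', P s s' = 1)
    (r : S → ℝ) (hr : ∀ s, r s ∈ Set.Icc (0 : ℝ) (1 + hbar))
    (V : S → ℝ) (hV : ∀ s, V s = r s + γ * P.mulVec V s) :
    ‖(∑' i : ℕ, (γ • P) ^ i).mulVec
        (fun s => Real.sqrt ((∑ s', P s s' * V s' ^ 2) - (∑ s', P s s' * V s') ^ 2))‖ ^ 2
      ≤ (1 + hbar) ^ 2 * (1 + γ) / (γ ^ 2 * (1 - γ) ^ 3) := by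
  have h1γ : (0:ℝ) < 1 - γ := by linarith
  have hV' : ∀ s, V s = r s + γ * ∑ t, P s t * V t := by
    intro s; rw [hV s]; rfl
  set R : ℝ := (1 + hbar) / (1 - γ) with hRdef
  have hR0 : 0 ≤ R := div_nonneg (by linarith) h1γ.le
  have hRe : R * (1 - γ) = 1 + hbar := by rw [hRdef]; field_simp
  -- upper bound on V
  have hVub : ∀ s, V s ≤ R := by
    intro s
    obtain ⟨s0, -, hs0⟩ := Finset.exists_max_image Finset.univ V ⟨s, Finset.mem_univ s⟩
    have hPle : ∑ t, P s0 t * V t ≤ V s0 := by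
      calc ∑ t, P s0 t * V t ≤ ∑ t, P s0 t * V s0 :=
            Finset.sum_le_sum fun t _ =>
              mul_le_mul_of_nonneg_left (hs0 t (Finset.mem_univ t)) (hP0 s0 t)
        _ = V s0 := by rw [← Finset.sum_mul, hP1, one_mul]
    have h0 := hV' s0
    have hr2 := (hr s0).2
    have : V s0 ≤ R := by
      have : (1 - γ) * V s0 ≤ 1 + hbar := by nlinarith
      rw [hRdef, le_div_iff₀ h1γ]; linarith
    exact le_trans (hs0 s (Finset.mem_univ s)) this
  have hV0 : ∀ s, 0 ≤ V s := by
    intro s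
    obtain ⟨s0, -, hs0⟩ := Finset.exists_min_image Finset.univ V ⟨s, Finset.mem_univ s⟩
    have hPge : V s0 ≤ ∑ t, P s0 t * V t := by
      calc V s0 = ∑ t, P s0 t * V s0 := by rw [← Finset.sum_mul, hP1, one_mul]
        _ ≤ ∑ t, P s0 t * V t :=
            Finset.sum_le_sum fun t _ =>
              mul_le_mul_of_nonneg_left (hs0 t (Finset.mem_univ t)) (hP0 s0 t)
    have h0 := hV' s0
    have hr1 := (hr s0).1
    have : 0 ≤ V s0 := by nlinarith
    exact le_trans this (hs0 s (Finset.mem_univ s))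
  have hPVle : ∀ s, ∑ t, P s t * V t ≤ R := by
    intro s
    calc ∑ t, P s t * V t ≤ ∑ t, P s t * R :=
          Finset.sum_le_sum fun t _ => mul_le_mul_of_nonneg_left (hVub t) (hP0 s t)
      _ = R := by rw [← Finset.sum_mul, hP1, one_mul]
  have hVub2 : ∀ s, V s ≤ r s + γ * R := by
    intro s
    rw [hV' s]
    have := hPVle s
    nlinarith
  -- sigma
  set σv : S → ℝ := fun s => (∑ t, P s t * V t ^ 2) - (∑ t, P s t * V t) ^ 2 with hσdef
  have hJ : ∀ (q : S → ℝ) (f : S → ℝ), (∀ t, 0 ≤ q t) → (∑ t, q t = 1) →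
      (∑ t, q t * f t) ^ 2 ≤ ∑ t, q t * f t ^ 2 := by
    intro q f hq hq1
    have key := Finset.sum_mul_sq_le_sq_mul_sq Finset.univ
      (fun t => Real.sqrt (q t)) (fun t => Real.sqrt (q t) * f t)
    have e1 : ∀ t : S, Real.sqrt (q t) * (Real.sqrt (q t) * f t) = q t * f t := by
      intro t; rw [← mul_assoc, Real.mul_self_sqrt (hq t)]
    have e2 : ∀ t : S, Real.sqrt (q t) ^ 2 = q t := fun t => Real.sq_sqrt (hq t)
    have e3 : ∀ t : S, (Real.sqrt (q t) * f t) ^ 2 = q t * f t ^ 2 := by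
      intro t; rw [mul_pow, Real.sq_sqrt (hq t)]
    simp_rw [e1, e2, e3, hq1, one_mul] at key
    exact key
  have hσ0 : ∀ s, 0 ≤ σv s := by
    intro s
    have := hJ (fun t => P s t) V (hP0 s) (hP1 s)
    simp only [hσdef]; linarith
  have hσub : ∀ s, σv s ≤ R ^ 2 := by
    intro s
    have h1 : ∑ t, P s t * V t ^ 2 ≤ R ^ 2 := by
      calc ∑ t, P s t * V t ^ 2 ≤ ∑ t, P s t * R ^ 2 :=
            Finset.sum_le_sum fun t _ => mul_le_mul_of_nonneg_left
              (pow_le_pow_left₀ (hV0 t) (hVub t) 2) (hP0 s t)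
        _ = R ^ 2 := by rw [← Finset.sum_mul, hP1, one_mul]
    have h2 : 0 ≤ (∑ t, P s t * V t) ^ 2 := sq_nonneg _
    simp only [hσdef]; linarith
  -- supersolution W
  set C : ℝ := R * (1 + γ) / γ ^ 2 with hCdef
  have hC0 : 0 ≤ C := by
    rw [hCdef]; positivity
  have hγC : R ≤ γ * C := by
    rw [hCdef]
    rw [mul_div_assoc', le_div_iff₀ (by positivity)]
    nlinarith
  set W : S → ℝ := fun s => C * V s - V s ^ 2 / γ with hWdef
  have hW0 : ∀ s, 0 ≤ W s := by
    intro s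
    have h1 : V s ^ 2 / γ ≤ C * V s := by
      rw [div_le_iff₀ hγ0]
      have : V s * V s ≤ V s * (γ * C) := mul_le_mul_of_nonneg_left
        (le_trans (hVub s) hγC) (hV0 s)
      nlinarith
    simp only [hWdef]; linarith
  have hWK : ∀ s, W s ≤ C * R := by
    intro s
    have h1 : 0 ≤ V s ^ 2 / γ := by positivity
    have h2 : C * V s ≤ C * R := mul_le_mul_of_nonneg_left (hVub s) hC0
    simp only [hWdef]; linarith
  -- core scalar inequality
  have hcore : ∀ s, γ * V s ^ 2 - (V s - r s) ^ 2 ≤ R * (1 + γ) * r s := by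
    intro s
    have hr1 := (hr s).1
    have hr2 := (hr s).2
    have h2 : V s ≤ r s + γ * R := hVub2 s
    nlinarith [sq_nonneg (V s), mul_nonneg hr1 (hV0 s), sq_nonneg (V s - r s),
      mul_nonneg hr1 hr1, mul_nonneg (mul_nonneg hr1 hγ0.le) hR0]
  -- key: σ + γ P W ≤ W
  have hkey : ∀ s, σv s + γ * (∑ t, P s t * W t) ≤ W s := by
    intro s
    have hsum : ∑ t, P s t * W t = C * (∑ t, P s t * V t) - (∑ t, P s t * V t ^ 2) / γ := by
      rw [Finset.mul_sum, Finset.sum_div, ← Finset.sum_sub_distrib]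
      refine Finset.sum_congr rfl fun t _ => ?_
      simp only [hWdef]
      field_simp
    rw [hsum]
    have ha : γ * (∑ t, P s t * V t) = V s - r s := by
      have := hV' s; linarith
    have ha' : (∑ t, P s t * V t) = (V s - r s) / γ := by
      rw [eq_div_iff hγ0.ne']; linarith [ha]
    have happ : W s - (σv s + γ * (C * (∑ t, P s t * V t) - (∑ t, P s t * V t ^ 2) / γ))
        = (R * (1 + γ) * r s - (γ * V s ^ 2 - (V s - r s) ^ 2)) / γ ^ 2 := by
      simp only [hWdef, hσdef, hCdef, ha']
      field_simp
      ring
    have := hcore s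
    nlinarith [happ, div_nonneg (by linarith : (0:ℝ) ≤ R * (1 + γ) * r s - (γ * V s ^ 2 - (V s - r s) ^ 2)) (by positivity : (0:ℝ) ≤ γ ^ 2)]
  -- iterates
  set u : S → ℝ := fun s => Real.sqrt (σv s) with hudef
  set e : ℕ → S → ℝ := fun i s => ∑ t, (P ^ i) s t * σv t with hedef
  set d : ℕ → S → ℝ := fun i s => ∑ t, (P ^ i) s t * u t with hddef
  have he0 : ∀ i s, 0 ≤ e i s := fun i s =>
    Finset.sum_nonneg fun t _ => mul_nonneg (matpow_nonneg P hP0 i s t) (hσ0 t)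
  have hezero : ∀ s, e 0 s = σv s := by
    intro s; simp [hedef, Matrix.one_apply]
  have hesucc : ∀ i s, e (i + 1) s = ∑ t, P s t * e i t := by
    intro i s
    simp only [hedef, pow_succ', Matrix.mul_apply, Finset.sum_mul]
    rw [Finset.sum_comm]
    simp_rw [mul_assoc, ← Finset.mul_sum]
  -- induction bound: partial sums of γ^i e i ≤ W
  have hFW : ∀ (n : ℕ) (s : S), ∑ i ∈ Finset.range n, γ ^ i * e i s ≤ W s := by
    intro n
    induction n with
    | zero => intro s; simpa using hW0 s
    | succ n ih =>
      intro s
      rw [Finset.sum_range_succ']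
      have h2 : ∑ i ∈ Finset.range n, γ ^ (i+1) * e (i+1) s
          = γ * ∑ t, P s t * (∑ i ∈ Finset.range n, γ ^ i * e i t) := by
        have hstep : ∀ i ∈ Finset.range n, γ ^ (i+1) * e (i+1) s
            = ∑ t, γ * (P s t * (γ ^ i * e i t)) := by
          intro i _
          rw [hesucc i s, Finset.mul_sum]
          exact Finset.sum_congr rfl fun t _ => by ring
        rw [Finset.sum_congr rfl hstep, Finset.sum_comm]
        rw [Finset.mul_sum]
        refine Finset.sum_congr rfl fun t _ => ?_
        simp [Finset.mul_sum]
      have h3 : ∑ t, P s t * (∑ i ∈ Finset.range n, γ ^ i * e i t) ≤ ∑ t, P s t * W t :=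
        Finset.sum_le_sum fun t _ => mul_le_mul_of_nonneg_left (ih t) (hP0 s t)
      have h4 := hkey s
      calc (∑ i ∈ Finset.range n, γ ^ (i+1) * e (i+1) s) + γ ^ 0 * e 0 s
          = γ * (∑ t, P s t * (∑ i ∈ Finset.range n, γ ^ i * e i t)) + σv s := by
            rw [h2, hezero, pow_zero, one_mul]
        _ ≤ γ * (∑ t, P s t * W t) + σv s := by
            have := mul_le_mul_of_nonneg_left h3 hγ0.le
            linarith
        _ ≤ W s := by linarith
  have hd0 : ∀ i s, 0 ≤ d i s := fun i s =>
    Finset.sum_nonneg fun t _ => mul_nonneg (matpow_nonneg P hP0 i s t) (Real.sqrt_nonneg _)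
  have hdle : ∀ i s, d i s ≤ Real.sqrt (e i s) := by
    intro i s
    rw [Real.le_sqrt (hd0 i s) (he0 i s)]
    have := hJ (fun t => (P ^ i) s t) u (matpow_nonneg P hP0 i s) (matpow_rowsum P hP1 i s)
    have hu2 : ∀ t : S, u t ^ 2 = σv t := fun t => Real.sq_sqrt (hσ0 t)
    simp_rw [hu2] at this
    exact this
  have hdR : ∀ i s, d i s ≤ R := by
    intro i s
    refine le_trans (hdle i s) ?_
    calc Real.sqrt (e i s) ≤ Real.sqrt (R ^ 2) := Real.sqrt_le_sqrt (by
          calc e i s ≤ ∑ t, (P ^ i) s t * R ^ 2 :=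
                Finset.sum_le_sum fun t _ => mul_le_mul_of_nonneg_left (hσub t)
                  (matpow_nonneg P hP0 i s t)
            _ = R ^ 2 := by rw [← Finset.sum_mul, matpow_rowsum P hP1, one_mul])
      _ = R := Real.sqrt_sq hR0
  have hgs : ∀ n : ℕ, ∑ i ∈ Finset.range n, γ ^ i ≤ 1 / (1 - γ) := by
    intro n
    rw [le_div_iff₀ h1γ]
    have hm := geom_sum_mul γ n
    have : (∑ i ∈ Finset.range n, γ ^ i) * (1 - γ) = 1 - γ ^ n := by linear_combination -hm
    rw [this]
    have := pow_nonneg hγ0.le n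
    linarith
  have hCR0 : 0 ≤ C * R / (1 - γ) := by positivity
  have hxn : ∀ (n : ℕ) (s : S), ∑ i ∈ Finset.range n, γ ^ i * d i s
      ≤ Real.sqrt (C * R / (1 - γ)) := by
    intro n s
    have hsum0 : 0 ≤ ∑ i ∈ Finset.range n, γ ^ i * d i s :=
      Finset.sum_nonneg fun i _ => mul_nonneg (pow_nonneg hγ0.le i) (hd0 i s)
    rw [Real.le_sqrt hsum0 hCR0]
    have step1 : ∑ i ∈ Finset.range n, γ ^ i * d i s
        ≤ ∑ i ∈ Finset.range n, Real.sqrt (γ ^ i) * Real.sqrt (γ ^ i * e i s) := by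
      refine Finset.sum_le_sum fun i _ => ?_
      have hgi : (0:ℝ) ≤ γ ^ i := pow_nonneg hγ0.le i
      have : Real.sqrt (γ ^ i) * Real.sqrt (γ ^ i * e i s)
          = γ ^ i * Real.sqrt (e i s) := by
        rw [Real.sqrt_mul hgi, ← mul_assoc, Real.mul_self_sqrt hgi]
      rw [this]
      exact mul_le_mul_of_nonneg_left (hdle i s) hgi
    have hCS := Finset.sum_mul_sq_le_sq_mul_sq (Finset.range n)
      (fun i => Real.sqrt (γ ^ i)) (fun i => Real.sqrt (γ ^ i * e i s))
    have hf2 : ∀ i ∈ Finset.range n, Real.sqrt (γ ^ i) ^ 2 = γ ^ i :=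
      fun i _ => Real.sq_sqrt (pow_nonneg hγ0.le i)
    have hg2 : ∀ i ∈ Finset.range n, Real.sqrt (γ ^ i * e i s) ^ 2 = γ ^ i * e i s :=
      fun i _ => Real.sq_sqrt (mul_nonneg (pow_nonneg hγ0.le i) (he0 i s))
    rw [Finset.sum_congr rfl hf2, Finset.sum_congr rfl hg2] at hCS
    have hb1 : ∑ i ∈ Finset.range n, γ ^ i * e i s ≤ C * R := le_trans (hFW n s) (hWK s)
    have hb1' : 0 ≤ ∑ i ∈ Finset.range n, γ ^ i * e i s :=
      Finset.sum_nonneg fun i _ => mul_nonneg (pow_nonneg hγ0.le i) (he0 i s)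
    calc (∑ i ∈ Finset.range n, γ ^ i * d i s) ^ 2
        ≤ (∑ i ∈ Finset.range n, Real.sqrt (γ ^ i) * Real.sqrt (γ ^ i * e i s)) ^ 2 := by
          have h := step1
          have hs2 : 0 ≤ ∑ i ∈ Finset.range n, Real.sqrt (γ ^ i) * Real.sqrt (γ ^ i * e i s) :=
            Finset.sum_nonneg fun i _ => mul_nonneg (Real.sqrt_nonneg _) (Real.sqrt_nonneg _)
          nlinarith
      _ ≤ (∑ i ∈ Finset.range n, γ ^ i) * ∑ i ∈ Finset.range n, γ ^ i * e i s := hCS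
      _ ≤ (1 / (1 - γ)) * (C * R) := by
          refine mul_le_mul (hgs n) hb1 hb1' (by positivity)
      _ = C * R / (1 - γ) := by ring
  -- summability
  have hentry : ∀ (i : ℕ) (s t : S), ((γ • P) ^ i) s t = γ ^ i * (P ^ i) s t := by
    intro i s t
    rw [smul_pow]
    simp [Matrix.smul_apply, smul_eq_mul]
  have hgeom : Summable (fun i : ℕ => γ ^ i) := summable_geometric_of_lt_one hγ0.le hγ1
  have hsummat : Summable (fun i : ℕ => (γ • P) ^ i) := by
    refine Pi.summable.mpr fun s => ?_; rw [Pi.summable]; intro t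
    refine Summable.of_nonneg_of_le (fun i => ?_) (fun i => ?_) hgeom
    · rw [hentry]
      exact mul_nonneg (pow_nonneg hγ0.le i) (matpow_nonneg P hP0 i s t)
    · rw [hentry]
      have h1 : (P ^ i) s t ≤ 1 := matpow_le_one P hP0 hP1 i s t
      have h2 : (0:ℝ) ≤ γ ^ i := pow_nonneg hγ0.le i
      calc γ ^ i * (P ^ i) s t ≤ γ ^ i * 1 := mul_le_mul_of_nonneg_left h1 h2
        _ = γ ^ i := mul_one _
  have hsummand : ∀ s t : S, Summable (fun i : ℕ => ((γ • P) ^ i) s t * u t) := by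
    intro s t
    refine Summable.of_nonneg_of_le (fun i => ?_) (fun i => ?_) (hgeom.mul_right (u t))
    · rw [hentry]
      exact mul_nonneg (mul_nonneg (pow_nonneg hγ0.le i) (matpow_nonneg P hP0 i s t))
        (Real.sqrt_nonneg _)
    · rw [hentry]
      have h1 : (P ^ i) s t ≤ 1 := matpow_le_one P hP0 hP1 i s t
      have h2 : (0:ℝ) ≤ γ ^ i := pow_nonneg hγ0.le i
      have h3 : (0:ℝ) ≤ u t := Real.sqrt_nonneg _
      calc γ ^ i * (P ^ i) s t * u t = γ ^ i * ((P ^ i) s t * u t) := by ring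
        _ ≤ γ ^ i * (1 * u t) :=
            mul_le_mul_of_nonneg_left (mul_le_mul_of_nonneg_right h1 h3) h2
        _ = γ ^ i * u t := by ring
  have hsumd : ∀ s, Summable (fun i : ℕ => γ ^ i * d i s) := by
    intro s
    refine Summable.of_nonneg_of_le (fun i => mul_nonneg (pow_nonneg hγ0.le i) (hd0 i s))
      (fun i => ?_) (hgeom.mul_right R)
    exact mul_le_mul_of_nonneg_left (hdR i s) (pow_nonneg hγ0.le i)
  -- the mulVec identity
  have hA : ∀ s, (∑' i : ℕ, (γ • P) ^ i).mulVec u s = ∑' i : ℕ, γ ^ i * d i s := by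
    intro s
    have h1 : (∑' i : ℕ, (γ • P) ^ i).mulVec u s = ∑ t, (∑' i : ℕ, ((γ • P) ^ i) s t) * u t := by
      show ∑ t, (∑' i : ℕ, (γ • P) ^ i) s t * u t = _
      refine Finset.sum_congr rfl fun t _ => ?_
      exact congrArg (· * u t) ((congrFun (tsum_apply hsummat) t).trans (tsum_apply (Pi.summable.mp hsummat s)))
    rw [h1]
    have h2 : ∀ t : S, (∑' i : ℕ, ((γ • P) ^ i) s t) * u t
        = ∑' i : ℕ, ((γ • P) ^ i) s t * u t := fun t => (tsum_mul_right).symm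
    simp_rw [h2]
    rw [← Summable.tsum_finsetSum (fun t _ => hsummand s t)]
    refine tsum_congr fun i => ?_
    simp_rw [hentry]
    rw [hddef, Finset.mul_sum]
    exact Finset.sum_congr rfl fun t _ => by ring
  -- final assembly
  have hRHS : C * R / (1 - γ) = (1 + hbar) ^ 2 * (1 + γ) / (γ ^ 2 * (1 - γ) ^ 3) := by
    rw [hCdef, hRdef]
    field_simp
  have hxle : ∀ s, (∑' i : ℕ, γ ^ i * d i s) ≤ Real.sqrt (C * R / (1 - γ)) :=
    fun s => Summable.tsum_le_of_sum_range_le (hsumd s) (fun n => hxn n s)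
  have hx0 : ∀ s, 0 ≤ ∑' i : ℕ, γ ^ i * d i s :=
    fun s => tsum_nonneg fun i => mul_nonneg (pow_nonneg hγ0.le i) (hd0 i s)
  have hnorm : ‖(∑' i : ℕ, (γ • P) ^ i).mulVec u‖ ≤ Real.sqrt (C * R / (1 - γ)) := by
    rw [pi_norm_le_iff_of_nonneg (Real.sqrt_nonneg _)]
    intro s
    rw [Real.norm_eq_abs, hA s, abs_of_nonneg (hx0 s)]
    exact hxle s
  have final : ‖(∑' i : ℕ, (γ • P) ^ i).mulVec u‖ ^ 2
      ≤ (1 + hbar) ^ 2 * (1 + γ) / (γ ^ 2 * (1 - γ) ^ 3) := by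
    rw [← hRHS, ← Real.sq_sqrt hCR0]
    exact pow_le_pow_left₀ (norm_nonneg _) hnorm 2
  exact final
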